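/- Let α > 0 be real and let Y ⊆ ℕ be an infinite set with canonical enumeration {y_n : n ∈ ℕ} such that d*_α(Y) > 0. Set λ := 1 − (1 − d*_α(Y)/2)^{1/(α+1)} > 0. Then there exists an infinite set S ⊆ ℕ such that |Y ∩ [1, y_n]| ≥ λ·y_n for all n ∈ S. -/

import Mathlib

open Filter Topology MeasureTheory Set

/-- The canonical (increasing) enumeration of a set of natural numbers. -/
noncomputable def enumOf (A : Set ℕ) : ℕ → ℕ := Nat.nth (· ∈ A)

/-- `idxSet A B` is the set `A_B = {a_b : b ∈ B}`, where `{a_n}` is the canonical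
enumeration of `A`. -/
noncomputable def idxSet (A B : Set ℕ) : Set ℕ := enumOf A '' B

/-- `seqLE X Y` means `X ≤ Y`, i.e. `x_n ≤ y_n` for all `n`, for the canonical
enumerations `{x_n}` of `X` and `{y_n}` of `Y`. -/
def seqLE (X Y : Set ℕ) : Prop := ∀ n, enumOf X n ≤ enumOf Y n

/-- `A` has asymptotic density `c`: `|A ∩ [1,n]| / n → c`. -/
def HasDensity (A : Set ℕ) (c : ℝ) : Prop :=
  Tendsto (fun n : ℕ => ((A ∩ Set.Icc 1 n).ncard : ℝ) / n) atTop (𝓝 c)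

/-- An ideal on ℕ: closed under finite unions and subsets, contains all finite sets,
and is not the whole power set. -/
def IsIdeal (I : Set (Set ℕ)) : Prop :=
  (∀ A B : Set ℕ, A ∈ I → B ∈ I → A ∪ B ∈ I) ∧
  (∀ A B : Set ℕ, A ⊆ B → B ∈ I → A ∈ I) ∧
  (∀ A : Set ℕ, A.Finite → A ∈ I) ∧
  Set.univ ∉ I

/-- `I` is weakly thinnable: `A_B ∉ I` whenever `A` admits non-zero asymptotic density
and `B ∉ I`. -/
def WeaklyThinnable (I : Set (Set ℕ)) : Prop :=
  ∀ A B : Set ℕ, (∃ c : ℝ, c ≠ 0 ∧ HasDensity A c) → B ∉ I → idxSet A B ∉ I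

/-- `I` is thinnable: weakly thinnable, `B_A ∉ I` whenever `A` admits non-zero asymptotic
density and `B ∉ I`, and `X ∉ I` whenever `X ≤ Y` and `Y ∉ I`. -/
def Thinnable (I : Set (Set ℕ)) : Prop :=
  WeaklyThinnable I ∧
  (∀ A B : Set ℕ, (∃ c : ℝ, c ≠ 0 ∧ HasDensity A c) → B ∉ I → idxSet B A ∉ I) ∧
  (∀ X Y : Set ℕ, X.Infinite → Y.Infinite → seqLE X Y → Y ∉ I → X ∉ I)

/-- `I` is strechable: `kA ∉ I` for all (positive) `k` and all `A ∉ I`. -/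
def Strechable (I : Set (Set ℕ)) : Prop :=
  ∀ k : ℕ, 0 < k → ∀ A : Set ℕ, A ∉ I → (fun a => k * a) '' A ∉ I

/-- The upper `α`-density `d⋆_α(S) = limsup_n (∑_{i ∈ S ∩ [1,n]} i^α) / (∑_{i ∈ [1,n]} i^α)`. -/
noncomputable def upperAlphaDensity (α : ℝ) (S : Set ℕ) : ℝ :=
  limsup (fun n : ℕ =>
    (∑ i ∈ Finset.Icc 1 n, S.indicator (fun i : ℕ => (i : ℝ) ^ α) i) /
      (∑ i ∈ Finset.Icc 1 n, (i : ℝ) ^ α)) atTop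

/-- The ideal `I_α` of sets with zero upper `α`-density. -/
def alphaIdeal (α : ℝ) : Set (Set ℕ) := {S | upperAlphaDensity α S = 0}


-- Bernoulli consequences
lemma pow_succ_ub {α : ℝ} (hα : 0 < α) {i : ℕ} (hi : 1 ≤ i) :
    (α+1) * (i:ℝ)^α ≤ ((i:ℝ)+1)^(α+1) - (i:ℝ)^(α+1) := by
  have hx0 : (0:ℝ) < (i:ℝ) := by exact_mod_cast hi
  have key := one_add_mul_self_le_rpow_one_add (s := 1/(i:ℝ)) (by nlinarith [one_div_nonneg.2 hx0.le]) (p := α+1)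
    (by linarith)
  have h2 : (1 + (α+1) * (1/(i:ℝ))) * (i:ℝ)^(α+1) ≤ (1+1/(i:ℝ))^(α+1) * (i:ℝ)^(α+1) :=
    mul_le_mul_of_nonneg_right key (Real.rpow_nonneg hx0.le _)
  have h3 : (1+1/(i:ℝ))^(α+1) * (i:ℝ)^(α+1) = ((i:ℝ)+1)^(α+1) := by
    rw [← Real.mul_rpow (by positivity) hx0.le]
    congr 1
    field_simp
  have h4 : (i:ℝ)^(α+1) = (i:ℝ)^α * i := Real.rpow_add_one hx0.ne' α
  have h5 : (1 + (α+1) * (1/(i:ℝ))) * (i:ℝ)^(α+1) = (i:ℝ)^(α+1) + (α+1) * (i:ℝ)^α := by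
    rw [h4]; field_simp
  rw [h5, h3] at h2
  linarith

lemma pow_succ_lb {α : ℝ} (hα : 0 < α) {i : ℕ} (hi : 1 ≤ i) :
    (i:ℝ)^(α+1) - ((i:ℝ)-1)^(α+1) ≤ (α+1) * (i:ℝ)^α := by
  have hx0 : (0:ℝ) < (i:ℝ) := by exact_mod_cast hi
  have hx1 : (1:ℝ) ≤ (i:ℝ) := by exact_mod_cast hi
  have hinv : 1/(i:ℝ) ≤ 1 := by
    rw [div_le_one hx0]; exact hx1
  have key := one_add_mul_self_le_rpow_one_add (s := -(1/(i:ℝ))) (by linarith) (p := α+1)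
    (by linarith)
  have h2 : (1 + (α+1) * -(1/(i:ℝ))) * (i:ℝ)^(α+1) ≤ (1 + -(1/(i:ℝ)))^(α+1) * (i:ℝ)^(α+1) :=
    mul_le_mul_of_nonneg_right key (Real.rpow_nonneg hx0.le _)
  have h3 : (1 + -(1/(i:ℝ)))^(α+1) * (i:ℝ)^(α+1) = ((i:ℝ)-1)^(α+1) := by
    rw [← Real.mul_rpow (by rw [← sub_eq_add_neg]; have : 1/(i:ℝ) ≤ 1 := hinv; linarith) hx0.le]
    congr 1
    field_simp
    ring
  have h4 : (i:ℝ)^(α+1) = (i:ℝ)^α * i := Real.rpow_add_one hx0.ne' α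
  have h5 : (1 + (α+1) * -(1/(i:ℝ))) * (i:ℝ)^(α+1) = (i:ℝ)^(α+1) - (α+1) * (i:ℝ)^α := by
    rw [h4]; field_simp; ring
  rw [h5, h3] at h2
  linarith

-- Lower bound for the full sum
lemma denom_lb {α : ℝ} (hα : 0 < α) (m : ℕ) :
    (m:ℝ)^(α+1) ≤ (α+1) * ∑ i ∈ Finset.Icc 1 m, (i:ℝ)^α := by
  have hIcc : ∑ i ∈ Finset.Icc 1 m, (i:ℝ)^α = ∑ j ∈ Finset.range m, ((1+j:ℕ):ℝ)^α := by
    rw [← Finset.Ico_add_one_right_eq_Icc, Finset.sum_Ico_eq_sum_range]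
    simp
  rw [hIcc, Finset.mul_sum]
  have tele : ∑ j ∈ Finset.range m, (((j+1:ℕ):ℝ)^(α+1) - ((j:ℕ):ℝ)^(α+1))
      = (m:ℝ)^(α+1) - ((0:ℕ):ℝ)^(α+1) := Finset.sum_range_sub (fun j => ((j:ℕ):ℝ)^(α+1)) m
  have h0 : ((0:ℕ):ℝ)^(α+1) = 0 := by
    simp [Real.zero_rpow (by linarith : α + 1 ≠ 0)]
  have hle : ∑ j ∈ Finset.range m, (((j+1:ℕ):ℝ)^(α+1) - ((j:ℕ):ℝ)^(α+1))
      ≤ ∑ j ∈ Finset.range m, (α+1) * ((1+j:ℕ):ℝ)^α := by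
    refine Finset.sum_le_sum fun j _ => ?_
    have := pow_succ_lb hα (i := j+1) (Nat.le_add_left 1 j)
    push_cast at this ⊢
    convert this using 2 <;> push_cast <;> first | rfl | ring
  rw [tele, h0] at hle
  linarith

-- Upper bound for a tail sum
lemma tail_ub {α : ℝ} (hα : 0 < α) {k m : ℕ} (hkm : k ≤ m) :
    (α+1) * ∑ i ∈ Finset.Icc (k+1) m, (i:ℝ)^α
      ≤ ((m+1:ℕ):ℝ)^(α+1) - ((k+1:ℕ):ℝ)^(α+1) := by
  have hIcc : ∑ i ∈ Finset.Icc (k+1) m, (i:ℝ)^α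
      = ∑ j ∈ Finset.range (m-k), ((k+1+j:ℕ):ℝ)^α := by
    rw [← Finset.Ico_add_one_right_eq_Icc, Finset.sum_Ico_eq_sum_range]
    have h : m+1-(k+1) = m-k := by omega
    rw [h]
  rw [hIcc, Finset.mul_sum]
  have tele : ∑ j ∈ Finset.range (m-k), (((k+1+(j+1):ℕ):ℝ)^(α+1) - ((k+1+j:ℕ):ℝ)^(α+1))
      = ((k+1+(m-k):ℕ):ℝ)^(α+1) - ((k+1+0:ℕ):ℝ)^(α+1) :=
    Finset.sum_range_sub (fun j => ((k+1+j:ℕ):ℝ)^(α+1)) (m-k)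
  have hle : ∑ j ∈ Finset.range (m-k), (α+1) * ((k+1+j:ℕ):ℝ)^α
      ≤ ∑ j ∈ Finset.range (m-k), (((k+1+(j+1):ℕ):ℝ)^(α+1) - ((k+1+j:ℕ):ℝ)^(α+1)) := by
    refine Finset.sum_le_sum fun j _ => ?_
    have := pow_succ_ub hα (i := k+1+j) (by omega)
    push_cast at this ⊢
    convert this using 2 <;> push_cast <;> first | rfl | ring
  rw [tele] at hle
  have : k+1+(m-k) = m+1 := by omega
  rw [this] at hle
  simpa using hle

-- Rearrangement: a card-c subset of [1,m] has α-sum at most that of the top c elements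
lemma sum_subset_le_top {α : ℝ} (hα : 0 < α) {m : ℕ} (T : Finset ℕ)
    (hT : T ⊆ Finset.Icc 1 m) :
    ∑ i ∈ T, (i:ℝ)^α ≤ ∑ i ∈ Finset.Icc (m - T.card + 1) m, (i:ℝ)^α := by
  classical
  set c := T.card with hc
  have hcm : c ≤ m := by
    have := Finset.card_le_card hT
    simpa [Nat.card_Icc] using this
  set ψ : ℕ → ℕ := fun t => m - (T.filter (fun s => t < s)).card with hψ
  have hmem : ∀ t ∈ T, 1 ≤ t ∧ t ≤ m := by
    intro t ht
    have := hT ht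
    simpa [Finset.mem_Icc] using this
  have hcard_le : ∀ t ∈ T, (T.filter (fun s => t < s)).card ≤ m - t := by
    intro t ht
    have hsub : T.filter (fun s => t < s) ⊆ Finset.Icc (t+1) m := by
      intro s hs
      rw [Finset.mem_filter] at hs
      have := hmem s hs.1
      rw [Finset.mem_Icc]
      omega
    have := Finset.card_le_card hsub
    simpa [Nat.card_Icc] using this
  have hcard_lt : ∀ t ∈ T, (T.filter (fun s => t < s)).card < c := by
    intro t ht
    refine Finset.card_lt_card ?_
    refine Finset.filter_ssubset.2 ⟨t, ht, by simp⟩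
  have hψ_ge : ∀ t ∈ T, t ≤ ψ t := by
    intro t ht
    have h1 := hcard_le t ht
    have h2 := (hmem t ht).2
    simp only [hψ]
    omega
  have hψ_mem : ∀ t ∈ T, ψ t ∈ Finset.Icc (m - c + 1) m := by
    intro t ht
    have h1 := hcard_lt t ht
    have h2 := (hmem t ht).1
    have h3 := hψ_ge t ht
    rw [Finset.mem_Icc]
    simp only [hψ] at h3 ⊢
    omega
  have hinj : Set.InjOn ψ T := by
    have hmono : ∀ t ∈ T, ∀ t' ∈ T, t < t' → ψ t < ψ t' := by
      intro t ht t' ht' htt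
      have hsub : T.filter (fun s => t' < s) ⊂ T.filter (fun s => t < s) := by
        constructor
        · intro s hs
          rw [Finset.mem_filter] at hs ⊢
          exact ⟨hs.1, lt_trans htt hs.2⟩
        · intro hcon
          have : t' ∈ T.filter (fun s => t' < s) := hcon (by
            rw [Finset.mem_filter]; exact ⟨ht', htt⟩)
          rw [Finset.mem_filter] at this
          omega
      have hlt := Finset.card_lt_card hsub
      have h1 := hcard_le t ht
      have h2 := (hmem t ht).2
      simp only [hψ]
      omega
    intro a ha b hb hab
    rcases lt_trichotomy a b with h | h | h
    · exact absurd hab (hmono a ha b hb h).ne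
    · exact h
    · exact absurd hab.symm (hmono b hb a ha h).ne
  calc ∑ i ∈ T, (i:ℝ)^α
      ≤ ∑ i ∈ T, ((ψ i : ℕ):ℝ)^α := by
        refine Finset.sum_le_sum fun i hi => ?_
        exact Real.rpow_le_rpow (by positivity) (by exact_mod_cast hψ_ge i hi) hα.le
    _ = ∑ s ∈ T.image ψ, (s:ℝ)^α := (Finset.sum_image (f := fun s : ℕ => (s:ℝ)^α) (fun a ha b hb h => hinj (Finset.mem_coe.2 ha) (Finset.mem_coe.2 hb) h)).symm
    _ ≤ ∑ i ∈ Finset.Icc (m - c + 1) m, (i:ℝ)^α := by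
        refine Finset.sum_le_sum_of_subset_of_nonneg ?_ (fun i _ _ => by positivity)
        intro s hs
        rw [Finset.mem_image] at hs
        obtain ⟨t, ht, rfl⟩ := hs
        exact hψ_mem t ht

lemma num_repr (α : ℝ) (Y : Set ℕ) [DecidablePred (· ∈ Y)] (m : ℕ) :
    ∑ i ∈ Finset.Icc 1 m, Y.indicator (fun i : ℕ => (i:ℝ)^α) i
      = ∑ i ∈ (Finset.Icc 1 m).filter (· ∈ Y), (i:ℝ)^α := by
  rw [Finset.sum_filter]
  refine Finset.sum_congr rfl fun i _ => ?_
  simp [Set.indicator_apply]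

lemma card_filter_eq_ncard (Y : Set ℕ) [DecidablePred (· ∈ Y)] (m : ℕ) :
    ((Finset.Icc 1 m).filter (· ∈ Y)).card = (Y ∩ Set.Icc 1 m).ncard := by
  have h : Y ∩ Set.Icc 1 m = ↑((Finset.Icc 1 m).filter (· ∈ Y)) := by
    ext x
    simp only [Finset.coe_filter, Finset.mem_Icc, Set.mem_inter_iff, Set.mem_Icc, Set.mem_setOf_eq]
    tauto
  rw [h, Set.ncard_coe_finset]

lemma denom_pos {α : ℝ} (hα : 0 < α) {m : ℕ} (hm : 1 ≤ m) :
    (0:ℝ) < ∑ i ∈ Finset.Icc 1 m, (i:ℝ)^α := by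
  have := denom_lb hα m
  have hn' : (0:ℝ) < (m:ℝ)^(α+1) := Real.rpow_pos_of_pos (by exact_mod_cast hm) _
  nlinarith

lemma num_nonneg (α : ℝ) (Y : Set ℕ) (m : ℕ) :
    (0:ℝ) ≤ ∑ i ∈ Finset.Icc 1 m, Y.indicator (fun i : ℕ => (i:ℝ)^α) i := by
  refine Finset.sum_nonneg fun i _ => ?_
  exact Set.indicator_nonneg (fun x _ => by positivity) i

lemma upperAlphaDensity_le_one {α : ℝ} (hα : 0 < α) (Y : Set ℕ) :
    upperAlphaDensity α Y ≤ 1 := by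
  have hb : ∀ n : ℕ, (∑ i ∈ Finset.Icc 1 n, Y.indicator (fun i : ℕ => (i:ℝ)^α) i) /
      (∑ i ∈ Finset.Icc 1 n, (i:ℝ)^α) ≤ 1 := by
    intro n
    rcases Nat.eq_zero_or_pos n with rfl | hn
    · simp
    · rw [div_le_one (denom_pos hα hn)]
      refine Finset.sum_le_sum fun i _ => ?_
      exact Set.indicator_le_self' (fun x _ => by positivity) i
  unfold upperAlphaDensity
  refine limsup_le_of_le ?_ (Eventually.of_forall hb)
  refine isCoboundedUnder_le_of_le atTop (x := 0) fun n => ?_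
  have := num_nonneg α Y n
  have h2 : (0:ℝ) ≤ ∑ i ∈ Finset.Icc 1 n, (i:ℝ)^α :=
    Finset.sum_nonneg fun i _ => by positivity
  positivity
theorem stmt4 (α : ℝ) (hα : 0 < α) (Y : Set ℕ) (hY : Y.Infinite)
    (h : 0 < upperAlphaDensity α Y) :
    0 < 1 - (1 - upperAlphaDensity α Y / 2) ^ ((1 : ℝ) / (α + 1)) ∧
    ∃ S : Set ℕ, S.Infinite ∧ ∀ n ∈ S,
      (1 - (1 - upperAlphaDensity α Y / 2) ^ ((1 : ℝ) / (α + 1))) * (enumOf Y n : ℝ) ≤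
        ((Y ∩ Set.Icc 1 (enumOf Y n)).ncard : ℝ) := by
  classical
  set d := upperAlphaDensity α Y with hd
  have hd1 : d ≤ 1 := upperAlphaDensity_le_one hα Y
  have hbase0 : (0:ℝ) ≤ 1 - d/2 := by linarith
  have hrlt : (1-d/2)^((1:ℝ)/(α+1)) < 1 :=
    Real.rpow_lt_one hbase0 (by linarith) (by positivity)
  have hrnn : (0:ℝ) ≤ (1-d/2)^((1:ℝ)/(α+1)) := Real.rpow_nonneg hbase0 _
  set lam : ℝ := 1 - (1-d/2)^((1:ℝ)/(α+1)) with hlam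
  have hlam0 : 0 < lam := by rw [hlam]; linarith
  have hlam1 : lam ≤ 1 := by rw [hlam]; linarith
  set S : Set ℕ :=
    {n | lam * (enumOf Y n : ℝ) ≤ ((Y ∩ Set.Icc 1 (enumOf Y n)).ncard : ℝ)} with hS
  refine ⟨hlam0, S, ?_, fun n hn => hn⟩
  by_contra hfin
  rw [Set.not_infinite] at hfin
  have hY' : (setOf (· ∈ Y)).Infinite := by
    exact hY
  -- threshold M for (1+1/y)^(α+1) < 1 + d/4
  have htend : Tendsto (fun n : ℕ => (1 + 1/(n:ℝ))^(α+1)) atTop (𝓝 1) := by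
    have h1 : Tendsto (fun n : ℕ => 1 + 1/(n:ℝ)) atTop (𝓝 1) := by
      simpa using (tendsto_const_nhds (x := (1:ℝ))).add tendsto_one_div_atTop_nhds_zero_nat
    have h2 := h1.rpow_const (p := α+1) (Or.inr (by positivity))
    simpa using h2
  have hev : ∀ᶠ n : ℕ in atTop, (1 + 1/(n:ℝ))^(α+1) < 1 + d/4 :=
    htend.eventually_lt_const (by linarith)
  obtain ⟨M, hM⟩ := eventually_atTop.1 hev
  obtain ⟨N₀, hN₀⟩ : ∃ N₀, ∀ n ∈ S, n < N₀ := by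
    rcases hfin.bddAbove with ⟨B, hB⟩
    exact ⟨B+1, fun n hn => Nat.lt_succ_of_le (hB hn)⟩
  set N := max N₀ (max M 1) with hN
  -- frequently the ratio exceeds 3d/4
  have hfreq : ∃ᶠ m in atTop, 3*d/4 <
      (∑ i ∈ Finset.Icc 1 m, Y.indicator (fun i : ℕ => (i:ℝ)^α) i) /
        (∑ i ∈ Finset.Icc 1 m, (i:ℝ)^α) := by
    refine frequently_lt_of_lt_limsup ?_ ?_
    · refine isCoboundedUnder_le_of_le atTop (x := 0) fun n => ?_
      have := num_nonneg α Y n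
      have h2 : (0:ℝ) ≤ ∑ i ∈ Finset.Icc 1 n, (i:ℝ)^α :=
        Finset.sum_nonneg fun i _ => by positivity
      positivity
    · show 3*d/4 < upperAlphaDensity α Y
      rw [← hd]; linarith
  obtain ⟨m, hm3, hmge⟩ :=
    (hfreq.and_eventually (eventually_ge_atTop (enumOf Y N))).exists
  -- y : the largest element of Y not exceeding m
  set y := Nat.findGreatest (· ∈ Y) m with hy
  have hNY : enumOf Y N ∈ Y := Nat.nth_mem_of_infinite hY' N
  have hyY : y ∈ Y := Nat.findGreatest_spec hmge hNY
  have hyge : enumOf Y N ≤ y := Nat.le_findGreatest hmge hNY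
  have hym : y ≤ m := Nat.findGreatest_le m
  have hNleN : N ≤ enumOf Y N := Nat.le_nth (fun hf => absurd hf hY')
  have hyM : M ≤ y := by omega
  have hy1 : 1 ≤ y := by omega
  set n := Nat.count (· ∈ Y) y with hn
  have hny : enumOf Y n = y := Nat.nth_count hyY
  have hNn : N ≤ n := by
    have h1 : enumOf Y N ≤ enumOf Y n := by rw [hny]; exact hyge
    exact (Nat.nth_le_nth hY').1 h1
  have hnS : n ∉ S := fun hcon => by have := hN₀ n hcon; omega
  have hClt : ((Y ∩ Set.Icc 1 y).ncard : ℝ) < lam * y := by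
    have := hnS
    rw [hS, Set.mem_setOf_eq, hny, not_le] at this
    exact this
  -- notation
  set num : ℕ → ℝ :=
    fun t => ∑ i ∈ Finset.Icc 1 t, Y.indicator (fun i : ℕ => (i:ℝ)^α) i with hnum
  set D : ℕ → ℝ := fun t => ∑ i ∈ Finset.Icc 1 t, (i:ℝ)^α with hD
  have hnum_eq : num m = num y := by
    simp only [hnum]
    rw [← Finset.Ico_add_one_right_eq_Icc, ← Finset.Ico_add_one_right_eq_Icc,
      ← Finset.sum_Ico_consecutive _ (by omega : 1 ≤ y+1) (by omega : y+1 ≤ m+1)]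
    have hzero : ∑ i ∈ Finset.Ico (y+1) (m+1), Y.indicator (fun i : ℕ => (i:ℝ)^α) i = 0 := by
      refine Finset.sum_eq_zero fun i hi => ?_
      rw [Finset.mem_Ico] at hi
      refine Set.indicator_of_notMem ?_ _
      intro hiY
      have hle : i ≤ Nat.findGreatest (· ∈ Y) m :=
        Nat.le_findGreatest (by omega) hiY
      rw [← hy] at hle
      omega
    rw [hzero, add_zero]
  have hDy_le : D y ≤ D m :=
    Finset.sum_le_sum_of_subset_of_nonneg (Finset.Icc_subset_Icc_right hym)
      (fun i _ _ => by positivity)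
  have hDy_pos : 0 < D y := denom_pos hα hy1
  have hnum_nn : 0 ≤ num y := num_nonneg α Y y
  have hfm_le : num m / D m ≤ num y / D y := by
    rw [hnum_eq]
    gcongr
  -- the quantitative bound at y
  set T := (Finset.Icc 1 y).filter (· ∈ Y) with hT
  have hTsub : T ⊆ Finset.Icc 1 y := Finset.filter_subset _ _
  set c := T.card with hc
  have hcard : c = (Y ∩ Set.Icc 1 y).ncard := card_filter_eq_ncard Y y
  have hcy : c ≤ y := by
    have := Finset.card_le_card hTsub
    simpa [Nat.card_Icc] using this
  have h1 : num y = ∑ i ∈ T, (i:ℝ)^α := num_repr α Y y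
  have h2 : ∑ i ∈ T, (i:ℝ)^α ≤ ∑ i ∈ Finset.Icc (y - c + 1) y, (i:ℝ)^α :=
    sum_subset_le_top hα T hTsub
  have h3 : (α+1) * ∑ i ∈ Finset.Icc ((y-c) + 1) y, (i:ℝ)^α
      ≤ ((y+1:ℕ):ℝ)^(α+1) - (((y-c)+1:ℕ):ℝ)^(α+1) := tail_ub hα (Nat.sub_le y c)
  have hyR : (0:ℝ) < (y:ℝ) := by exact_mod_cast hy1
  have hkR : (1 - lam) * (y:ℝ) ≤ (((y-c)+1:ℕ):ℝ) := by
    have hcR : (c:ℝ) < lam * y := by rw [hcard]; push_cast; exact hClt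
    have hycR : ((y - c:ℕ):ℝ) = (y:ℝ) - c := by
      push_cast [Nat.cast_sub hcy]; ring
    have hexp : (1-lam)*(y:ℝ) = y - lam*y := by ring
    push_cast
    rw [hycR] at *
    push_cast at hycR ⊢
    nlinarith
  have hbposl : (0:ℝ) ≤ (1-lam) * y := mul_nonneg (by linarith) hyR.le
  have hk1 : ((1-lam)*(y:ℝ))^(α+1) ≤ (((y-c)+1:ℕ):ℝ)^(α+1) :=
    Real.rpow_le_rpow hbposl hkR (by linarith)
  have hlampow : ((1-lam):ℝ)^(α+1) = 1 - d/2 := by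
    have hrw : (1:ℝ) - lam = (1-d/2)^((1:ℝ)/(α+1)) := by rw [hlam]; ring
    rw [hrw, ← Real.rpow_mul hbase0, one_div,
      inv_mul_cancel₀ (by linarith : α+1 ≠ 0), Real.rpow_one]
  have hmulp : ((1-lam)*(y:ℝ))^(α+1) = (1-d/2) * (y:ℝ)^(α+1) := by
    rw [Real.mul_rpow (by linarith) hyR.le, hlampow]
  have hA : (α+1) * num y ≤ ((y:ℝ)+1)^(α+1) - (1-d/2) * (y:ℝ)^(α+1) := by
    have step1 : (α+1) * num y ≤ (α+1) * ∑ i ∈ Finset.Icc ((y-c) + 1) y, (i:ℝ)^α := by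
      rw [h1]
      exact mul_le_mul_of_nonneg_left h2 (by linarith)
    have hcast : ((y+1:ℕ):ℝ) = (y:ℝ)+1 := by push_cast; ring
    rw [hcast] at h3
    rw [hmulp] at hk1
    linarith
  have hB : (y:ℝ)^(α+1) ≤ (α+1) * D y := denom_lb hα y
  have hypos : (0:ℝ) < (y:ℝ)^(α+1) := Real.rpow_pos_of_pos hyR _
  have hC : ((y:ℝ)+1)^(α+1) ≤ (1 + d/4) * (y:ℝ)^(α+1) := by
    have hMy : (1 + 1/(y:ℝ))^(α+1) < 1 + d/4 := hM y hyM
    have hsplit : ((y:ℝ)+1)^(α+1) = (1+1/(y:ℝ))^(α+1) * (y:ℝ)^(α+1) := by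
      rw [← Real.mul_rpow (by positivity) hyR.le]
      congr 1
      field_simp
    rw [hsplit]
    exact mul_le_mul_of_nonneg_right hMy.le hypos.le
  have hfy : num y / D y ≤ 3*d/4 := by
    rw [div_le_iff₀ hDy_pos]
    have hscaled : 3*d/4 * ((y:ℝ)^(α+1)) ≤ 3*d/4 * ((α+1) * D y) :=
      mul_le_mul_of_nonneg_left hB (by linarith)
    have key : (α+1) * num y ≤ (α+1) * (3*d/4 * D y) := by linarith
    exact le_of_mul_le_mul_left key (by linarith)
  have : 3*d/4 < num m / D m := hm3
  linarith
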